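/- Let β > 0, t_1, t_2 ∈ ℝ, and set a = |t_1|, b = |t_2|. Then (β²/4) ∫_{ℝ²} min( e^{−β(|u_1| + |u_2|)} , e^{−β(|u_1 − t_1| + |u_2 − t_2|)} ) du_1 du_2 = (1 + (β/2) min(a,b)) e^{−(β/2)(a+b)}. -/

import Mathlib

open MeasureTheory Set

namespace ExpModelAux

open Real

lemma int_Ioi (ρ s : ℝ) (hρ : 0 < ρ) :
    ∫ u in Ioi s, exp (-ρ * u) = exp (-ρ * s) / ρ := by
  have hderiv : ∀ x ∈ Ioi s, HasDerivAt (fun u : ℝ => -exp (-ρ * u) / ρ) (exp (-ρ * x)) x := by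
    intro x _
    have h1 : HasDerivAt (fun u : ℝ => -ρ * u) (-ρ) x := by
      simpa using (hasDerivAt_id x).const_mul (-ρ)
    have h2 : HasDerivAt (fun u => -(exp (-ρ * u) / ρ)) (-(exp (-ρ * x) * -ρ / ρ)) x :=
      (h1.exp.div_const ρ).neg
    convert h2 using 1
    · funext u; ring
    · rw [mul_neg, neg_div, neg_neg, mul_div_assoc, div_self hρ.ne', mul_one]
  have hcont : ContinuousWithinAt (fun u : ℝ => -exp (-ρ * u) / ρ) (Ici s) s :=
    (Continuous.div_const (continuous_exp.comp (continuous_const.mul continuous_id)).neg ρ).continuousWithinAt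
  have hint : IntegrableOn (fun x : ℝ => exp (-ρ * x)) (Ioi s) := exp_neg_integrableOn_Ioi s hρ
  have htend : Filter.Tendsto (fun u : ℝ => -exp (-ρ * u) / ρ) Filter.atTop (nhds 0) := by
    have : Filter.Tendsto (fun u : ℝ => -ρ * u) Filter.atTop Filter.atBot :=
      Filter.tendsto_atBot_mono (fun u => le_refl _) (Filter.tendsto_id.const_mul_atTop_of_neg (by linarith))
    have h2 := (Real.tendsto_exp_atBot.comp this).neg.div_const ρ
    simpa using h2
  have := integral_Ioi_of_hasDerivAt_of_tendsto hcont hderiv hint htend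
  rw [this]
  field_simp
  ring

lemma int_Iic (ρ s : ℝ) (hρ : 0 < ρ) :
    ∫ u in Iic s, exp (ρ * u) = exp (ρ * s) / ρ := by
  have h := integral_comp_neg_Iic s (fun x => exp (-ρ * x))
  have h2 : ∫ x in Iic s, exp (ρ * x) = ∫ x in Ioi (-s), exp (-ρ * x) := by
    rw [← h]; congr 1; funext x; congr 1; ring
  rw [h2, int_Ioi ρ (-s) hρ, show -ρ * -s = ρ * s by ring]

lemma intOn_Iic (ρ s : ℝ) (hρ : 0 < ρ) :
    IntegrableOn (fun u : ℝ => exp (ρ * u)) (Iic s) := by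
  have A : MeasurableEmbedding (fun x : ℝ => -x) :=
    (Homeomorph.neg ℝ).isClosedEmbedding.measurableEmbedding
  have hmap : (volume : Measure ℝ).restrict (Iic s)
      = Measure.map (fun x : ℝ => -x) ((volume : Measure ℝ).restrict ((fun x : ℝ => -x) ⁻¹' Iic s)) := by
    conv_lhs => rw [← Measure.map_neg_eq_self (volume : Measure ℝ)]
    exact Measure.restrict_map A.measurable measurableSet_Iic
  unfold IntegrableOn
  rw [hmap, A.integrable_map_iff]
  have hpre : (fun x : ℝ => -x) ⁻¹' Iic s = Ici (-s) := by
    ext x; simp [neg_le]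
  rw [hpre]
  have : IntegrableOn (fun x : ℝ => exp (-ρ * x)) (Ici (-s)) := by
    rw [integrableOn_Ici_iff_integrableOn_Ioi]
    exact exp_neg_integrableOn_Ioi (-s) hρ
  exact this.congr_fun (fun x _ => by simp [neg_mul, mul_neg]) measurableSet_Ici

lemma min_exp (β X Y : ℝ) (hβ : 0 < β) :
    min (exp (-β * X)) (exp (-β * Y)) = exp (-β * max X Y) := by
  rcases le_total X Y with h | h
  · rw [max_eq_right h, min_eq_right (exp_le_exp.2 (by nlinarith))]
  · rw [max_eq_left h, min_eq_left (exp_le_exp.2 (by nlinarith))]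


set_option maxHeartbeats 3200000 in
lemma inner_pt_left (c d t u : ℝ) (ht : 0 ≤ t)
    (hu : u ≤ max 0 (min t ((t + d - c) / 2))) :
    max (c + |u|) (d + |u - t|)
      = max (max c d) ((c + d + t) / 2) + (max 0 (min t ((t + d - c) / 2)) - u) := by
  rcases abs_cases u with ⟨h1, h2⟩ | ⟨h1, h2⟩ <;>
    rcases abs_cases (u - t) with ⟨h3, h4⟩ | ⟨h3, h4⟩ <;>
    rw [h1, h3] <;>
    simp only [max_def, min_def] at hu ⊢ <;>
    split_ifs at hu ⊢ <;> linarith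

set_option maxHeartbeats 3200000 in
lemma inner_pt_right (c d t u : ℝ) (ht : 0 ≤ t)
    (hu : max 0 (min t ((t + d - c) / 2)) ≤ u) :
    max (c + |u|) (d + |u - t|)
      = max (max c d) ((c + d + t) / 2) + (u - max 0 (min t ((t + d - c) / 2))) := by
  rcases abs_cases u with ⟨h1, h2⟩ | ⟨h1, h2⟩ <;>
    rcases abs_cases (u - t) with ⟨h3, h4⟩ | ⟨h3, h4⟩ <;>
    rw [h1, h3] <;>
    simp only [max_def, min_def] at hu ⊢ <;>
    split_ifs at hu ⊢ <;> linarith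


lemma inner_int_nonneg (β c d t : ℝ) (hβ : 0 < β) (ht : 0 ≤ t) :
    ∫ u : ℝ, min (exp (-β * (c + |u|))) (exp (-β * (d + |u - t|)))
      = (2 / β) * exp (-β * max (max c d) ((c + d + t) / 2)) := by
  set s := max 0 (min t ((t + d - c) / 2)) with hs
  set m := max (max c d) ((c + d + t) / 2) with hm
  have key : (fun u : ℝ => min (exp (-β * (c + |u|))) (exp (-β * (d + |u - t|))))
      = fun u : ℝ => exp (-β * max (c + |u|) (d + |u - t|)) := by
    funext u; exact min_exp β _ _ hβ
  rw [key]
  have hL : ∀ u ∈ Iic s, exp (-β * max (c + |u|) (d + |u - t|))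
      = exp (-β * (m + s)) * exp (β * u) := by
    intro u hu
    rw [inner_pt_left c d t u ht hu, ← Real.exp_add]
    congr 1; ring
  have hR : ∀ u ∈ Ioi s, exp (-β * max (c + |u|) (d + |u - t|))
      = exp (-β * (m - s)) * exp (-β * u) := by
    intro u hu
    rw [inner_pt_right c d t u ht (le_of_lt hu), ← Real.exp_add]
    congr 1; ring
  have iL : IntegrableOn (fun u : ℝ => exp (-β * max (c + |u|) (d + |u - t|))) (Iic s) := by
    refine IntegrableOn.congr_fun ((intOn_Iic β s hβ).const_mul (exp (-β * (m + s)))) ?_ measurableSet_Iic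
    intro u hu; exact (hL u hu).symm
  have iR : IntegrableOn (fun u : ℝ => exp (-β * max (c + |u|) (d + |u - t|))) (Ioi s) := by
    refine IntegrableOn.congr_fun ((exp_neg_integrableOn_Ioi s hβ).const_mul (exp (-β * (m - s)))) ?_ measurableSet_Ioi
    intro u hu; exact (hR u hu).symm
  rw [← intervalIntegral.integral_Iic_add_Ioi iL iR,
    setIntegral_congr_fun measurableSet_Iic hL,
    setIntegral_congr_fun measurableSet_Ioi hR,
    integral_const_mul, integral_const_mul,
    int_Iic β s hβ, int_Ioi β s hβ]
  rw [div_eq_mul_inv, div_eq_mul_inv, ← mul_assoc, ← mul_assoc, ← Real.exp_add, ← Real.exp_add,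
    show -β * (m + s) + β * s = -β * m by ring,
    show -β * (m - s) + -β * s = -β * m by ring]
  ring

lemma inner_int (β : ℝ) (hβ : 0 < β) (c d t : ℝ) :
    ∫ u : ℝ, min (exp (-β * (c + |u|))) (exp (-β * (d + |u - t|)))
      = (2 / β) * exp (-β * max (max c d) ((c + d + |t|) / 2)) := by
  rcases le_total 0 t with ht | ht
  · rw [abs_of_nonneg ht]; exact inner_int_nonneg β c d t hβ ht
  · have h0 := integral_neg_eq_self
      (fun u : ℝ => min (exp (-β * (c + |u|))) (exp (-β * (d + |u - t|)))) volume
    rw [← h0]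
    have : (fun x : ℝ => min (exp (-β * (c + |(-x)|))) (exp (-β * (d + |(-x) - t|))))
        = fun x : ℝ => min (exp (-β * (c + |x|))) (exp (-β * (d + |x - (-t)|))) := by
      funext x
      rw [abs_neg, show -x - t = -(x - (-t)) by ring, abs_neg]
    rw [this, inner_int_nonneg β c d (-t) hβ (by linarith), abs_of_nonpos ht]


set_option maxHeartbeats 1600000 in
lemma outer_pt_left (t b u : ℝ) (ht : 0 ≤ t) (hb : 0 ≤ b)
    (hu : u ≤ max 0 ((t - b) / 2)) :
    max (max |u| |u - t|) ((|u| + |u - t| + b) / 2)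
      = (t + b) / 2 + (max 0 ((t - b) / 2) - u) := by
  rcases abs_cases u with ⟨h1, h2⟩ | ⟨h1, h2⟩ <;>
    rcases abs_cases (u - t) with ⟨h3, h4⟩ | ⟨h3, h4⟩ <;>
    rw [h1, h3] <;>
    simp only [max_def, min_def] at hu ⊢ <;>
    split_ifs at hu ⊢ <;> linarith

set_option maxHeartbeats 1600000 in
lemma outer_pt_mid (t b u : ℝ) (ht : 0 ≤ t) (hb : 0 ≤ b)
    (hu1 : max 0 ((t - b) / 2) < u) (hu2 : u ≤ t - max 0 ((t - b) / 2)) :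
    max (max |u| |u - t|) ((|u| + |u - t| + b) / 2) = (t + b) / 2 := by
  rcases abs_cases u with ⟨h1, h2⟩ | ⟨h1, h2⟩ <;>
    rcases abs_cases (u - t) with ⟨h3, h4⟩ | ⟨h3, h4⟩ <;>
    rw [h1, h3] <;>
    simp only [max_def, min_def] at hu1 hu2 ⊢ <;>
    split_ifs at hu1 hu2 ⊢ <;> linarith

set_option maxHeartbeats 1600000 in
lemma outer_pt_right (t b u : ℝ) (ht : 0 ≤ t) (hb : 0 ≤ b)
    (hu : t - max 0 ((t - b) / 2) < u) :
    max (max |u| |u - t|) ((|u| + |u - t| + b) / 2)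
      = (t + b) / 2 + (u - (t - max 0 ((t - b) / 2))) := by
  rcases abs_cases u with ⟨h1, h2⟩ | ⟨h1, h2⟩ <;>
    rcases abs_cases (u - t) with ⟨h3, h4⟩ | ⟨h3, h4⟩ <;>
    rw [h1, h3] <;>
    simp only [max_def, min_def] at hu ⊢ <;>
    split_ifs at hu ⊢ <;> linarith

lemma outer_int_nonneg (β t b : ℝ) (hβ : 0 < β) (ht : 0 ≤ t) (hb : 0 ≤ b) :
    ∫ u : ℝ, exp (-β * max (max |u| |u - t|) ((|u| + |u - t| + b) / 2))
      = (2 / β + min t b) * exp (-β * ((t + b) / 2)) := by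
  set p := max 0 ((t - b) / 2) with hp
  set q := t - p with hq
  have hpq : p ≤ q := by
    rw [hq, hp]; simp only [max_def]; split_ifs <;> linarith
  have hqp : q - p = min t b := by
    rw [hq, hp]; simp only [max_def, min_def]; split_ifs <;> linarith
  have hL : ∀ u ∈ Iic p, exp (-β * max (max |u| |u - t|) ((|u| + |u - t| + b) / 2))
      = exp (-β * ((t + b) / 2 + p)) * exp (β * u) := by
    intro u hu
    rw [outer_pt_left t b u ht hb hu, ← Real.exp_add]
    congr 1; ring
  have hM : ∀ u ∈ Ioc p q, exp (-β * max (max |u| |u - t|) ((|u| + |u - t| + b) / 2))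
      = exp (-β * ((t + b) / 2)) := by
    intro u hu
    rw [outer_pt_mid t b u ht hb hu.1 hu.2]
  have hR : ∀ u ∈ Ioi q, exp (-β * max (max |u| |u - t|) ((|u| + |u - t| + b) / 2))
      = exp (-β * ((t + b) / 2 - q)) * exp (-β * u) := by
    intro u hu
    rw [outer_pt_right t b u ht hb hu, ← Real.exp_add]
    congr 1; ring
  have iL : IntegrableOn
      (fun u : ℝ => exp (-β * max (max |u| |u - t|) ((|u| + |u - t| + b) / 2))) (Iic p) := by
    refine IntegrableOn.congr_fun ((intOn_Iic β p hβ).const_mul (exp (-β * ((t + b) / 2 + p)))) ?_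
      measurableSet_Iic
    intro u hu; exact (hL u hu).symm
  have iM : IntegrableOn
      (fun u : ℝ => exp (-β * max (max |u| |u - t|) ((|u| + |u - t| + b) / 2))) (Ioc p q) := by
    refine IntegrableOn.congr_fun (integrableOn_const (C := exp (-β * ((t + b) / 2))) measure_Ioc_lt_top.ne) ?_
      measurableSet_Ioc
    intro u hu; exact (hM u hu).symm
  have iR : IntegrableOn
      (fun u : ℝ => exp (-β * max (max |u| |u - t|) ((|u| + |u - t| + b) / 2))) (Ioi q) := by
    refine IntegrableOn.congr_fun
      ((exp_neg_integrableOn_Ioi q hβ).const_mul (exp (-β * ((t + b) / 2 - q)))) ?_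
      measurableSet_Ioi
    intro u hu; exact (hR u hu).symm
  have iPR : IntegrableOn
      (fun u : ℝ => exp (-β * max (max |u| |u - t|) ((|u| + |u - t| + b) / 2))) (Ioi p) := by
    rw [← Ioc_union_Ioi_eq_Ioi hpq]; exact iM.union iR
  rw [← intervalIntegral.integral_Iic_add_Ioi iL iPR,
    ← Ioc_union_Ioi_eq_Ioi hpq,
    setIntegral_union (Ioc_disjoint_Ioi le_rfl) measurableSet_Ioi iM iR,
    setIntegral_congr_fun measurableSet_Iic hL,
    setIntegral_congr_fun measurableSet_Ioc hM,
    setIntegral_congr_fun measurableSet_Ioi hR,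
    integral_const_mul, integral_const_mul,
    int_Iic β p hβ, int_Ioi β q hβ, setIntegral_const,
    measureReal_def, Real.volume_Ioc, ENNReal.toReal_ofReal (by linarith : (0:ℝ) ≤ q - p), hqp, smul_eq_mul]
  have e1 : exp (-β * ((t + b) / 2 + p)) * (exp (β * p) / β) = exp (-β * ((t + b) / 2)) / β := by
    rw [← mul_div_assoc, ← Real.exp_add,
      show -β * ((t + b) / 2 + p) + β * p = -β * ((t + b) / 2) by ring]
  have e2 : exp (-β * ((t + b) / 2 - q)) * (exp (-β * q) / β) = exp (-β * ((t + b) / 2)) / β := by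
    rw [← mul_div_assoc, ← Real.exp_add,
      show -β * ((t + b) / 2 - q) + -β * q = -β * ((t + b) / 2) by ring]
  rw [e1, e2]
  ring

lemma outer_int (β : ℝ) (hβ : 0 < β) (t b : ℝ) (hb : 0 ≤ b) :
    ∫ u : ℝ, exp (-β * max (max |u| |u - t|) ((|u| + |u - t| + b) / 2))
      = (2 / β + min |t| b) * exp (-β * ((|t| + b) / 2)) := by
  rcases le_total 0 t with ht | ht
  · rw [abs_of_nonneg ht]; exact outer_int_nonneg β t b hβ ht hb
  · have h0 := integral_neg_eq_self
      (fun u : ℝ => exp (-β * max (max |u| |u - t|) ((|u| + |u - t| + b) / 2))) volume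
    rw [← h0]
    have he : (fun x : ℝ => exp (-β * max (max |(-x)| |(-x) - t|) ((|(-x)| + |(-x) - t| + b) / 2)))
        = fun x : ℝ => exp (-β * max (max |x| |x - (-t)|) ((|x| + |x - (-t)| + b) / 2)) := by
      funext x
      rw [abs_neg, show -x - t = -(x - (-t)) by ring, abs_neg]
    rw [he, outer_int_nonneg β (-t) b hβ (by linarith) hb, abs_of_nonpos ht]

end ExpModelAux


open ExpModelAux Real in
/-- `R_{0,t}(1,1)` for the two-dimensional exponential model. -/
theorem exponential_model_R (β t₁ t₂ : ℝ) (hβ : 0 < β) :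
    (β ^ 2 / 4) * ∫ u : ℝ × ℝ,
        min (Real.exp (-β * (|u.1| + |u.2|)))
          (Real.exp (-β * (|u.1 - t₁| + |u.2 - t₂|))) =
      (1 + (β / 2) * min |t₁| |t₂|) * Real.exp (-(β / 2) * (|t₁| + |t₂|)) := by
  have hone : Integrable (fun u : ℝ => exp (-β * |u|)) := by
    have l : IntegrableOn (fun u : ℝ => exp (-β * |u|)) (Iic 0) := by
      refine IntegrableOn.congr_fun (intOn_Iic β 0 hβ) ?_ measurableSet_Iic
      intro x hx
      show exp (β * x) = exp (-β * |x|)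
      rw [abs_of_nonpos (mem_Iic.mp hx)]; congr 1; ring
    have r : IntegrableOn (fun u : ℝ => exp (-β * |u|)) (Ioi 0) := by
      refine IntegrableOn.congr_fun (exp_neg_integrableOn_Ioi 0 hβ) ?_ measurableSet_Ioi
      intro x hx
      show exp (-β * x) = exp (-β * |x|)
      rw [abs_of_pos (mem_Ioi.mp hx)]
    have h := l.union r
    rwa [Iic_union_Ioi, integrableOn_univ] at h
  have hcont : Continuous (fun u : ℝ × ℝ =>
      min (exp (-β * (|u.1| + |u.2|))) (exp (-β * (|u.1 - t₁| + |u.2 - t₂|)))) := by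
    fun_prop
  have hint : Integrable (fun u : ℝ × ℝ =>
      min (exp (-β * (|u.1| + |u.2|))) (exp (-β * (|u.1 - t₁| + |u.2 - t₂|))))
      ((volume : Measure ℝ).prod volume) := by
    refine Integrable.mono' (hone.mul_prod hone) ?_ (Filter.Eventually.of_forall ?_)
    · rw [← Measure.volume_eq_prod]; exact hcont.aestronglyMeasurable
    · intro z
      rw [Real.norm_eq_abs, abs_of_pos (lt_min (exp_pos _) (exp_pos _))]
      calc min (exp (-β * (|z.1| + |z.2|))) (exp (-β * (|z.1 - t₁| + |z.2 - t₂|)))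
          ≤ exp (-β * (|z.1| + |z.2|)) := min_le_left _ _
        _ = exp (-β * |z.1|) * exp (-β * |z.2|) := by
            rw [← Real.exp_add]; congr 1; ring
  have step1 : (∫ u : ℝ × ℝ,
        min (exp (-β * (|u.1| + |u.2|))) (exp (-β * (|u.1 - t₁| + |u.2 - t₂|))))
      = ∫ x : ℝ, ∫ y : ℝ,
          min (exp (-β * (|x| + |y|))) (exp (-β * (|x - t₁| + |y - t₂|))) := by
    rw [Measure.volume_eq_prod]
    exact integral_prod _ hint
  rw [step1]
  simp_rw [inner_int β hβ]
  rw [integral_const_mul, outer_int β hβ t₁ |t₂| (abs_nonneg _),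
    show -β * ((|t₁| + |t₂|) / 2) = -(β / 2) * (|t₁| + |t₂|) by ring]
  field_simp
  ring
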